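/- Let T be a finite local commutative ring with maximal ideal m and residue field k = T/m, and suppose that the k-vector space Hom_T(k, T) of T-linear maps from k to T is one-dimensional. Then every faithful T-module N contains a T-submodule that is free of rank 1 over T; equivalently, there exists n ∈ N such that the map T → N sending t to t·n is injective. -/

import Mathlib

open IsLocalRing

/-- Let `T` be a finite local commutative ring with maximal ideal `m` and
residue field `k = T/m`, and suppose that the `k`-vector space `Hom_T(k, T)` is one-dimensional
(i.e. there is a nonzero `T`-linear map `φ : k → T` such that every `T`-linear map `ψ : k → T`
is a `k`-multiple of `φ`, the `k`-action being precomposition with multiplication).  Then every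
faithful `T`-module `N` contains a `T`-submodule free of rank `1` over `T`: there exists `n ∈ N`
such that `t ↦ t • n` is injective. -/
theorem finite_local_gorenstein_faithful_module_contains_free_rank_one
    (T : Type*) [CommRing T] [Finite T] [IsLocalRing T]
    (hgor : ∃ φ : IsLocalRing.ResidueField T →ₗ[T] T, φ ≠ 0 ∧
      ∀ ψ : IsLocalRing.ResidueField T →ₗ[T] T, ∃ c : IsLocalRing.ResidueField T,
        ∀ x : IsLocalRing.ResidueField T, ψ x = φ (c * x))
    (N : Type*) [AddCommGroup N] [Module T N]
    (hfaith : ∀ t : T, (∀ n : N, t • n = 0) → t = 0) :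
    ∃ n : N, Function.Injective fun t : T => t • n := by
  obtain ⟨φ, hφ0, hφ⟩ := hgor
  set s := φ 1 with hs
  have hres : ∀ t : T, φ (IsLocalRing.residue T t) = t * s := by
    intro t
    have h1 : IsLocalRing.residue T t = t • (1 : IsLocalRing.ResidueField T) := by
      show Ideal.Quotient.mk _ t = _
      rw [Algebra.smul_def, mul_one]
      rfl
    rw [h1, map_smul, smul_eq_mul, hs]
  -- s is in the socle
  have hsoc : ∀ y ∈ maximalIdeal T, y * s = 0 := by
    intro y hy
    have h := hres y
    rw [show IsLocalRing.residue T y = 0 from Ideal.Quotient.eq_zero_iff_mem.mpr hy,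
      map_zero] at h
    exact h.symm
  have hs0 : s ≠ 0 := by
    intro h
    apply hφ0
    ext x
    obtain ⟨t, rfl⟩ := Ideal.Quotient.mk_surjective x
    show φ (IsLocalRing.residue T t) = 0
    rw [hres, h, mul_zero]
  -- socle lemma: every socle element is a unit multiple of s
  have socle_lem : ∀ u : T, u ≠ 0 → (∀ y ∈ maximalIdeal T, y * u = 0) →
      ∃ a : Tˣ, u = (a : T) * s := by
    intro u hu0 humem
    have hker : maximalIdeal T ≤ LinearMap.ker (LinearMap.toSpanSingleton T T u) := by
      intro y hy
      simp only [LinearMap.mem_ker, LinearMap.toSpanSingleton_apply, smul_eq_mul]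
      exact humem y hy
    let ψ : IsLocalRing.ResidueField T →ₗ[T] T :=
      (maximalIdeal T).liftQ (LinearMap.toSpanSingleton T T u) hker
    obtain ⟨c, hc⟩ := hφ ψ
    obtain ⟨a, rfl⟩ := Ideal.Quotient.mk_surjective c
    have h1 : ψ 1 = u := by
      show ψ (IsLocalRing.residue T 1) = u
      show (1 : T) • u = u
      rw [one_smul]
    have h2 : ψ 1 = a * s := by
      rw [hc 1]
      show φ (IsLocalRing.residue T a * 1) = a * s
      rw [mul_one]
      exact hres a
    have hu : u = a * s := by rw [← h1, h2]
    have ha : a ∉ maximalIdeal T := by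
      intro hmem
      apply hu0
      rw [hu, hsoc a hmem]
    exact ⟨(IsLocalRing.notMem_maximalIdeal.mp ha).unit, by
      rw [IsUnit.unit_spec]; exact hu⟩
  -- nilpotency of maximal ideal
  obtain ⟨K, hK⟩ := IsArtinianRing.isNilpotent_jacobson_bot (R := T)
  rw [IsLocalRing.jacobson_eq_maximalIdeal ⊥ bot_ne_top] at hK
  -- pick n with s • n ≠ 0
  have hsN : ∃ n : N, s • n ≠ 0 := by
    by_contra h
    push_neg at h
    exact hs0 (hfaith s h)
  obtain ⟨n, hn⟩ := hsN
  refine ⟨n, ?_⟩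
  have key : ∀ t : T, t • n = 0 → t = 0 := by
    intro t ht
    by_contra ht0
    classical
    have hex : ∃ j, ∀ x ∈ (maximalIdeal T) ^ j, x * t = 0 := by
      refine ⟨K, fun x hx => ?_⟩
      rw [hK] at hx
      rw [show x = 0 from hx, zero_mul]
    have hj := Nat.find_spec hex
    set j := Nat.find hex with hjdef
    have hj0 : j ≠ 0 := by
      intro h0
      apply ht0
      have : (1 : T) ∈ (maximalIdeal T) ^ j := by
        rw [h0, pow_zero, Ideal.one_eq_top]; trivial
      simpa using hj 1 this
    obtain ⟨x, hxmem, hxt⟩ : ∃ x ∈ (maximalIdeal T) ^ (j - 1), x * t ≠ 0 := by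
      have := Nat.find_min hex (Nat.sub_lt (Nat.pos_of_ne_zero hj0) one_pos)
      push_neg at this
      exact this
    have hum : ∀ y ∈ maximalIdeal T, y * (x * t) = 0 := by
      intro y hy
      have hmul : x * y ∈ (maximalIdeal T) ^ j := by
        have hpow : (maximalIdeal T) ^ j = (maximalIdeal T) ^ (j - 1) * maximalIdeal T := by
          conv_lhs => rw [← Nat.succ_pred_eq_of_ne_zero hj0]
          rw [pow_succ, Nat.pred_eq_sub_one]
        rw [hpow]
        exact Ideal.mul_mem_mul hxmem hy
      calc y * (x * t) = (x * y) * t := by ring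
        _ = 0 := hj _ hmul
    obtain ⟨a, ha⟩ := socle_lem (x * t) hxt hum
    apply hn
    have hsu : s = (a⁻¹ : Tˣ) * (x * t) := by
      rw [ha, ← mul_assoc, Units.inv_mul, one_mul]
    rw [hsu, mul_smul, mul_smul, ht, smul_zero, smul_zero]
  intro a b hab
  have : (a - b) • n = 0 := by
    simp only [sub_smul]
    rw [sub_eq_zero]
    exact hab
  exact sub_eq_zero.mp (key _ this)
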